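/- A vector α ∈ ℤ^{r+1} is a positive real root whose last coordinate k_{r+1} equals 1 if and only if α = e_{r+1} + Σ_{i∈S} e_i for some subset S ⊆ {1,…,r}. (Thus the set Φ₁ of positive real roots with k_{r+1} = 1 is exactly {Σ_{i∈S} e_i + e_{r+1} : S ⊆ {1,…,r}}.) -/

import Mathlib

open Finset

/-- The fundamental reflection `w_i` as a function on `ℤ^{r+1}`. -/
def wFun (r : ℕ) (i : Fin (r + 1)) (k : Fin (r + 1) → ℤ) : Fin (r + 1) → ℤ :=
  fun j =>
    if j = i then
      if i = Fin.last r then (∑ l : Fin r, k l.castSucc) - k (Fin.last r)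
      else k (Fin.last r) - k i
    else k j

lemma wFun_apply_ne (r : ℕ) (i : Fin (r + 1)) (k : Fin (r + 1) → ℤ) {j : Fin (r + 1)}
    (h : j ≠ i) : wFun r i k j = k j := by
  simp [wFun, h]

lemma wFun_involutive (r : ℕ) (i : Fin (r + 1)) : Function.Involutive (wFun r i) := by
  intro k
  funext j
  by_cases hj : j = i
  · subst hj
    by_cases hl : j = Fin.last r
    · subst hl
      have h1 : ∀ l : Fin r, wFun r (Fin.last r) k l.castSucc = k l.castSucc := fun l =>
        wFun_apply_ne _ _ _ (Fin.castSucc_lt_last l).ne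
      have h0 : wFun r (Fin.last r) k (Fin.last r)
          = (∑ l : Fin r, k l.castSucc) - k (Fin.last r) := by
        simp [wFun]
      have h2 : wFun r (Fin.last r) (wFun r (Fin.last r) k) (Fin.last r)
          = (∑ l : Fin r, wFun r (Fin.last r) k l.castSucc)
              - wFun r (Fin.last r) k (Fin.last r) := by
        simp [wFun]
      rw [h2, h0]
      simp only [h1]
      ring
    · have hlast : Fin.last r ≠ j := fun h => hl h.symm
      have h1 : wFun r j k (Fin.last r) = k (Fin.last r) := wFun_apply_ne _ _ _ hlast
      have h0 : wFun r j k j = k (Fin.last r) - k j := by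
        simp [wFun, hl]
      have h2 : wFun r j (wFun r j k) j
          = wFun r j k (Fin.last r) - wFun r j k j := by
        simp [wFun, hl]
      rw [h2, h1, h0]
      ring
  · rw [wFun_apply_ne _ _ _ hj, wFun_apply_ne _ _ _ hj]

/-- The fundamental reflection `w_i` as a permutation of `ℤ^{r+1}`. -/
def wRefl (r : ℕ) (i : Fin (r + 1)) : Equiv.Perm (Fin (r + 1) → ℤ) :=
  (wFun_involutive r i).toPerm

/-- The Weyl group `W = ⟨w₁, …, w_{r+1}⟩`. -/
def weylW (r : ℕ) : Subgroup (Equiv.Perm (Fin (r + 1) → ℤ)) :=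
  Subgroup.closure (Set.range fun i : Fin (r + 1) => wRefl r i)

/-- The set of real roots `Δ^{re} = W·{e₁, …, e_{r+1}}`. -/
def realRoots (r : ℕ) : Set (Fin (r + 1) → ℤ) :=
  {α | ∃ w ∈ weylW r, ∃ i : Fin (r + 1), α = w (Pi.single i 1)}


section aux
variable (r : ℕ)

/-- The invariant quadratic form (half of `B(α,α)`). -/
def Qf (k : Fin (r + 1) → ℤ) : ℤ :=
  (∑ l : Fin r, (k l.castSucc) ^ 2) + (k (Fin.last r)) ^ 2
    - k (Fin.last r) * ∑ l : Fin r, k l.castSucc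

lemma Qf_wFun (i : Fin (r + 1)) (k : Fin (r + 1) → ℤ) : Qf r (wFun r i k) = Qf r k := by
  by_cases hl : i = Fin.last r
  · subst hl
    have hsum : ∀ l : Fin r, wFun r (Fin.last r) k l.castSucc = k l.castSucc := fun l =>
      wFun_apply_ne _ _ _ (Fin.castSucc_lt_last l).ne
    have h0 : wFun r (Fin.last r) k (Fin.last r)
        = (∑ l : Fin r, k l.castSucc) - k (Fin.last r) := by simp [wFun]
    simp only [Qf, hsum, h0]
    ring
  · obtain ⟨m, rfl⟩ := Fin.eq_castSucc_of_ne_last hl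
    have h0 : wFun r m.castSucc k m.castSucc = k (Fin.last r) - k m.castSucc := by
      simp [wFun, hl]
    have hne : ∀ l : Fin r, l ≠ m → wFun r m.castSucc k l.castSucc = k l.castSucc := fun l hl' =>
      wFun_apply_ne _ _ _ (by simpa [Fin.castSucc_inj] using hl')
    have hlast : wFun r m.castSucc k (Fin.last r) = k (Fin.last r) :=
      wFun_apply_ne _ _ _ (fun h => hl h.symm) 
    have key : ∀ f : (Fin (r+1) → ℤ) → Fin r → ℤ,
        (∀ l : Fin r, l ≠ m → f (wFun r m.castSucc k) l = f k l) →
        ∑ l : Fin r, f (wFun r m.castSucc k) l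
          = f (wFun r m.castSucc k) m + (∑ l : Fin r, f k l - f k m) := by
      intro f hf
      rw [← Finset.add_sum_erase Finset.univ _ (Finset.mem_univ m),
          ← Finset.add_sum_erase Finset.univ (fun l => f k l) (Finset.mem_univ m)]
      have : ∑ l ∈ Finset.univ.erase m, f (wFun r m.castSucc k) l
          = ∑ l ∈ Finset.univ.erase m, f k l :=
        Finset.sum_congr rfl fun l hlm => hf l (Finset.ne_of_mem_erase hlm)
      rw [this]; ring
    have h1 := key (fun g l => (g l.castSucc) ^ 2) (fun l hl' => by rw [hne l hl'])
    have h2 := key (fun g l => g l.castSucc) (fun l hl' => by rw [hne l hl'])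
    simp only [Qf, h1, h2, hlast, h0]
    ring

lemma Qf_weyl {w : Equiv.Perm (Fin (r + 1) → ℤ)} (hw : w ∈ weylW r)
    (k : Fin (r + 1) → ℤ) : Qf r (w k) = Qf r k := by
  induction hw using Subgroup.closure_induction generalizing k with
  | mem x hx =>
      obtain ⟨i, rfl⟩ := hx
      exact Qf_wFun r i k
  | one => rfl
  | mul x y hx hy px py => simpa using (px (y k)).trans (py k)
  | inv x hx px =>
      have := px (x⁻¹ k)
      rw [show x (x⁻¹ k) = k from x.apply_symm_apply k] at this
      exact this.symm

lemma Qf_single (i : Fin (r + 1)) : Qf r (Pi.single i (1 : ℤ)) = 1 := by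
  by_cases hl : i = Fin.last r
  · subst hl
    have : ∀ l : Fin r, (Pi.single (Fin.last r) (1 : ℤ) : Fin (r+1) → ℤ) l.castSucc = 0 := fun l =>
      Pi.single_eq_of_ne (Fin.castSucc_lt_last l).ne 1
    simp [Qf, this]
  · obtain ⟨m, rfl⟩ := Fin.eq_castSucc_of_ne_last hl
    have hlast : (Pi.single m.castSucc (1 : ℤ) : Fin (r+1) → ℤ) (Fin.last r) = 0 :=
      Pi.single_eq_of_ne (fun h => hl h.symm) 1
    have hs : ∀ l : Fin r, (Pi.single m.castSucc (1 : ℤ) : Fin (r+1) → ℤ) l.castSucc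
        = if l = m then 1 else 0 := by
      intro l
      by_cases h : l = m
      · subst h; simp
      · rw [Pi.single_eq_of_ne (by simpa [Fin.castSucc_inj] using h) 1, if_neg h]
    simp [Qf, hs, hlast, Finset.sum_ite_eq']

lemma coord_last (S : Finset (Fin r)) :
    ((Pi.single (Fin.last r) (1:ℤ) + ∑ i ∈ S, Pi.single i.castSucc (1:ℤ) : Fin (r+1) → ℤ)) (Fin.last r) = 1 := by
  have : ∀ i : Fin r, (Pi.single i.castSucc (1:ℤ) : Fin (r+1) → ℤ) (Fin.last r) = 0 := fun i =>
    Pi.single_eq_of_ne (Fin.castSucc_lt_last i).ne' 1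
  simp [Finset.sum_apply, this]

lemma coord_castSucc (S : Finset (Fin r)) (m : Fin r) :
    ((Pi.single (Fin.last r) (1:ℤ) + ∑ i ∈ S, Pi.single i.castSucc (1:ℤ) : Fin (r+1) → ℤ)) m.castSucc
      = if m ∈ S then 1 else 0 := by
  have h0 : (Pi.single (Fin.last r) (1:ℤ) : Fin (r+1) → ℤ) m.castSucc =
      0 := Pi.single_eq_of_ne (Fin.castSucc_lt_last m).ne 1
  have hs : ∀ i : Fin r, (Pi.single i.castSucc (1:ℤ) : Fin (r+1) → ℤ) m.castSucc
      = if m = i then 1 else 0 := by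
    intro i
    by_cases h : m = i
    · subst h; simp
    · rw [Pi.single_eq_of_ne (by simpa [Fin.castSucc_inj] using h) 1, if_neg h]
  simp [Finset.sum_apply, h0, hs, Finset.sum_ite_eq]

lemma realRoots_wFun {α : Fin (r + 1) → ℤ} (i : Fin (r + 1)) (hα : α ∈ realRoots r) :
    wFun r i α ∈ realRoots r := by
  obtain ⟨w, hw, j, rfl⟩ := hα
  exact ⟨wRefl r i * w, mul_mem (Subgroup.subset_closure ⟨i, rfl⟩) hw, j, rfl⟩

lemma root_mem (S : Finset (Fin r)) :
    ((Pi.single (Fin.last r) (1:ℤ) + ∑ i ∈ S, Pi.single i.castSucc (1:ℤ) : Fin (r+1) → ℤ)) ∈ realRoots r := by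
  classical
  induction S using Finset.induction_on with
  | empty => exact ⟨1, one_mem _, Fin.last r, by simp⟩
  | @insert a S ha ih =>
      have key : wFun r a.castSucc
            (Pi.single (Fin.last r) (1:ℤ) + ∑ i ∈ S, Pi.single i.castSucc (1:ℤ))
          = Pi.single (Fin.last r) (1:ℤ) + ∑ i ∈ insert a S, Pi.single i.castSucc (1:ℤ) := by
        funext j
        induction j using Fin.lastCases with
        | last =>
            rw [wFun_apply_ne _ _ _ (Fin.castSucc_lt_last a).ne', coord_last, coord_last]
        | cast m =>
            by_cases hm : m = a
            · subst hm
              have : wFun r m.castSucc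
                  (Pi.single (Fin.last r) (1:ℤ) + ∑ i ∈ S, Pi.single i.castSucc (1:ℤ))
                  m.castSucc
                  = ((Pi.single (Fin.last r) (1:ℤ) + ∑ i ∈ S, Pi.single i.castSucc (1:ℤ) : Fin (r+1) → ℤ))
                      (Fin.last r)
                    - ((Pi.single (Fin.last r) (1:ℤ) + ∑ i ∈ S, Pi.single i.castSucc (1:ℤ) : Fin (r+1) → ℤ))
                      m.castSucc := by
                simp [wFun, (Fin.castSucc_lt_last m).ne]
              rw [this, coord_last, coord_castSucc, coord_castSucc, if_neg ha,
                if_pos (Finset.mem_insert_self m S)]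
              norm_num
            · rw [wFun_apply_ne _ _ _ (by simpa [Fin.castSucc_inj] using hm),
                coord_castSucc, coord_castSucc]
              simp [Finset.mem_insert, hm]
      rw [← key]
      exact realRoots_wFun r _ ih
end aux

theorem posRealRoot_last_coord_one_iff_aux (r : ℕ) (hr : 1 ≤ r) (α : Fin (r + 1) → ℤ) :
    (α ∈ realRoots r ∧ (∀ j, 0 ≤ α j) ∧ α (Fin.last r) = 1) ↔
      ∃ S : Finset (Fin r),
        α = Pi.single (Fin.last r) 1 + ∑ i ∈ S, Pi.single i.castSucc (1 : ℤ) := by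
  classical
  constructor
  · rintro ⟨hroot, hnn, hlast⟩
    have hQ : Qf r α = 1 := by
      obtain ⟨w, hw, i, rfl⟩ := hroot
      rw [Qf_weyl r hw, Qf_single]
    have hsum : ∑ l : Fin r, α l.castSucc * (α l.castSucc - 1) = 0 := by
      simp only [Qf, hlast] at hQ
      have : ∑ l : Fin r, α l.castSucc * (α l.castSucc - 1)
          = (∑ l : Fin r, (α l.castSucc) ^ 2) - ∑ l : Fin r, α l.castSucc := by
        rw [← Finset.sum_sub_distrib]
        exact Finset.sum_congr rfl fun l _ => by ring
      rw [this]
      simp only [one_pow, one_mul] at hQ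
      linarith
    have hterm : ∀ k : ℤ, 0 ≤ k → 0 ≤ k * (k - 1) := by
      intro k hk
      rcases Int.lt_or_le k 1 with h1 | h1
      · have : k = 0 := by omega
        simp [this]
      · exact mul_nonneg (by omega) (by omega)
    have h01 : ∀ l : Fin r, α l.castSucc = 0 ∨ α l.castSucc = 1 := by
      have hz := (Finset.sum_eq_zero_iff_of_nonneg (fun l _ =>
        hterm _ (hnn l.castSucc))).mp hsum
      intro l
      have := hz l (Finset.mem_univ l)
      rcases mul_eq_zero.mp this with h | h
      · exact Or.inl h
      · exact Or.inr (by omega)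
    refine ⟨Finset.univ.filter (fun l => α l.castSucc = 1), ?_⟩
    funext j
    induction j using Fin.lastCases with
    | last => rw [hlast, coord_last]
    | cast m =>
        rw [coord_castSucc]
        rcases h01 m with h | h <;> simp [h, Finset.mem_filter]
  · rintro ⟨S, rfl⟩
    refine ⟨root_mem r S, ?_, coord_last r S⟩
    intro j
    induction j using Fin.lastCases with
    | last => rw [coord_last]; norm_num
    | cast m => rw [coord_castSucc]; split <;> norm_num


/-- `α ∈ ℤ^{r+1}` is a positive real root with last coordinate `1` if and only if
`α = e_{r+1} + ∑_{i ∈ S} e_i` for some subset `S ⊆ {1, …, r}`. -/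
theorem posRealRoot_last_coord_one_iff (r : ℕ) (hr : 1 ≤ r) (α : Fin (r + 1) → ℤ) :
    (α ∈ realRoots r ∧ (∀ j, 0 ≤ α j) ∧ α (Fin.last r) = 1) ↔
      ∃ S : Finset (Fin r),
        α = Pi.single (Fin.last r) 1 + ∑ i ∈ S, Pi.single i.castSucc (1 : ℤ) := by
  exact posRealRoot_last_coord_one_iff_aux r hr α
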